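/- Let L ≥ 1, let U₁,…,U_L be types and V₁,…,V_L be additive commutative groups, and let F_l : U_l → V_l, P_l : U_{l+1} → U_l, and additive maps R_l : V_{l+1} → V_l be given for the appropriate indices. Given a family of approximations u_l ∈ U_l (l = 1,…,L), define the FAS right-hand sides top-down by g_L = 0 and g_l = F_l(P_l u_{l+1}) + R_l(g_{l+1} − F_{l+1}(u_{l+1})) for l < L. Suppose the residuals vanish on every level: g_l − F_l(u_l) = 0 for all l = 1,…,L. Then F_L(u_L) = 0, and F_l(u_l) = F_l(P_l u_{l+1}) for every l = 1,…,L−1; that is, the family (u_1,…,u_L) satisfies the incremental multilevel collocation equations. -/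
import Mathlib


universe u w

/-- If all FAS level residuals `g_l − F_l(u_l)` vanish, where the FAS right-hand sides are
defined top-down by `g_L = 0` and `g_l = F_l(P_l u_{l+1}) + R_l(g_{l+1} − F_{l+1}(u_{l+1}))`,
then the family `(u_1,…,u_L)` satisfies the incremental multilevel collocation equations. -/
theorem fas_convergence_implies_ml_collocation
    (L : ℕ) (hL : 1 ≤ L) (U : ℕ → Type u) (V : ℕ → Type w)
    [∀ l, AddCommGroup (V l)]
    (F : ∀ l, U l → V l) (P : ∀ l, U (l + 1) → U l) (R : ∀ l, V (l + 1) →+ V l)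
    (u : ∀ l, U l) (g : ∀ l, V l)
    (hgL : g L = 0)
    (hg : ∀ l, l < L →
      g l = F l (P l (u (l + 1))) + R l (g (l + 1) - F (l + 1) (u (l + 1))))
    (hres : ∀ l, 1 ≤ l → l ≤ L → g l - F l (u l) = 0) :
    F L (u L) = 0 ∧ ∀ l, 1 ≤ l → l < L → F l (u l) = F l (P l (u (l + 1))) := by
  have hF : ∀ l, 1 ≤ l → l ≤ L → F l (u l) = g l := fun l h1 h2 => by
    have := hres l h1 h2; rw [sub_eq_zero] at this; exact this.symm
  refine ⟨by rw [hF L hL le_rfl, hgL], fun l h1 h2 => ?_⟩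
  have h3 : g (l + 1) - F (l + 1) (u (l + 1)) = 0 := hres (l+1) (Nat.le_add_left 1 l) h2
  rw [hF l h1 h2.le, hg l h2, h3, map_zero, add_zero]
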